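/- Consider the two-item all-pay auction with parameters (B_1, B_2, v_{11}, v_{12}, v_{21}, v_{22}). If B_1 = B_2 and v_{11} = v_{12} = v_{21} = v_{22} = v, let c = min{v, B_1}. Then the strategy profile in which each player i ∈ {1,2} plays the mixed strategy given by the distribution of the random bid vector (U, c − U), where U is uniformly distributed on [0, c] (i.e., the uniform distribution on the segment {(t, c − t) : t ∈ [0, c]}), is a Nash equilibrium. -/

import Mathlib

open MeasureTheory Set

noncomputable section

/-- `L_j = min {B₁, B₂, v_{1j}, v_{2j}}` for item `j` of the two-item auction. -/
def Lval2 (B : Fin 2 → ℝ) (v : Fin 2 → Fin 2 → ℝ) (j : Fin 2) : ℝ :=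
  min (min (B 0) (B 1)) (min (v 0 j) (v 1 j))

/-- Probability that player `i` wins item `j` when bidding `xi` on it while the
opponent bids `xo`: the strictly higher bid wins; on a tie at `L_j` the player with
the strictly larger `min {Bᵢ, v_{ij}}` wins, and all other ties are fair coins. -/
def winProb2 (B : Fin 2 → ℝ) (v : Fin 2 → Fin 2 → ℝ) (i j : Fin 2) (xi xo : ℝ) : ℝ :=
  if xo < xi then 1
  else if xi < xo then 0
  else if xi = Lval2 B v j ∧ min (B (1 - i)) (v (1 - i) j) < min (B i) (v i j) then 1
  else if xi = Lval2 B v j ∧ min (B i) (v i j) < min (B (1 - i)) (v (1 - i) j) then 0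
  else 1 / 2

/-- Expected total utility of player `i` from the pure bid vectors `p` (own) and
`q` (opponent): the sum over the two items of the item payoffs. -/
def payoff2 (B : Fin 2 → ℝ) (v : Fin 2 → Fin 2 → ℝ) (i : Fin 2) (p q : ℝ × ℝ) : ℝ :=
  (winProb2 B v i 0 p.1 q.1 * v i 0 - p.1) +
    (winProb2 B v i 1 p.2 q.2 * v i 1 - p.2)

/-- Feasible bid vectors of a player with budget `Bi`. -/
def Feas (Bi : ℝ) : Set (ℝ × ℝ) := {p | 0 ≤ p.1 ∧ 0 ≤ p.2 ∧ p.1 + p.2 ≤ Bi}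

/-- A mixed strategy with budget `Bi`: a probability measure on the feasible set. -/
def IsStrategy2 (Bi : ℝ) (μ : Measure (ℝ × ℝ)) : Prop :=
  IsProbabilityMeasure μ ∧ μ (Feas Bi) = 1

/-- Expected utility of player `i` when he plays `μ` and the opponent plays `ν`. -/
def expUtil2 (B : Fin 2 → ℝ) (v : Fin 2 → Fin 2 → ℝ) (i : Fin 2)
    (μ ν : Measure (ℝ × ℝ)) : ℝ :=
  ∫ p, (∫ q, payoff2 B v i p q ∂ν) ∂μ

/-- `(F 0, F 1)` is a (mixed) Nash equilibrium of the two-item all-pay auction. -/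
def IsNash2 (B : Fin 2 → ℝ) (v : Fin 2 → Fin 2 → ℝ) (F : Fin 2 → Measure (ℝ × ℝ)) :
    Prop :=
  (∀ i, IsStrategy2 (B i) (F i)) ∧
  ∀ i, ∀ μ, IsStrategy2 (B i) μ →
    expUtil2 B v i μ (F (1 - i)) ≤ expUtil2 B v i (F i) (F (1 - i))

/-- The uniform distribution on the segment from `a` to `b` in the plane: the
pushforward of the uniform distribution on `[0, 1]` under the affine
parameterization of the segment. -/
def unifSeg (a b : ℝ × ℝ) : Measure (ℝ × ℝ) :=
  Measure.map (fun t : ℝ => ((1 - t) * a.1 + t * b.1, (1 - t) * a.2 + t * b.2))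
    (volume.restrict (Icc (0 : ℝ) 1))

lemma winProb2_meas (B : Fin 2 → ℝ) (v : Fin 2 → Fin 2 → ℝ) (i j : Fin 2) (xi : ℝ) :
    Measurable (winProb2 B v i j xi) := by
  unfold winProb2
  refine Measurable.ite (measurableSet_lt measurable_id measurable_const) measurable_const ?_
  refine Measurable.ite (measurableSet_lt measurable_const measurable_id) measurable_const ?_
  by_cases hP : (xi = Lval2 B v j ∧ min (B (1 - i)) (v (1 - i) j) < min (B i) (v i j)) <;>
    by_cases hQ : (xi = Lval2 B v j ∧ min (B i) (v i j) < min (B (1 - i)) (v (1 - i) j)) <;>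
      simp [hP, hQ]

lemma winProb2_nonneg (B : Fin 2 → ℝ) (v : Fin 2 → Fin 2 → ℝ) (i j : Fin 2) (xi xo : ℝ) :
    0 ≤ winProb2 B v i j xi xo := by
  unfold winProb2; split_ifs <;> norm_num

lemma winProb2_le_one (B : Fin 2 → ℝ) (v : Fin 2 → Fin 2 → ℝ) (i j : Fin 2) (xi xo : ℝ) :
    winProb2 B v i j xi xo ≤ 1 := by
  unfold winProb2; split_ifs <;> norm_num

lemma winProb2_of_lt (B : Fin 2 → ℝ) (v : Fin 2 → Fin 2 → ℝ) (i j : Fin 2) {xi u : ℝ}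
    (h : u < xi) : winProb2 B v i j xi u = 1 := by
  unfold winProb2; rw [if_pos h]

lemma winProb2_of_gt (B : Fin 2 → ℝ) (v : Fin 2 → Fin 2 → ℝ) (i j : Fin 2) {xi u : ℝ}
    (h : xi < u) : winProb2 B v i j xi u = 0 := by
  unfold winProb2; rw [if_neg (lt_asymm h), if_pos h]

lemma payoff2_meas (B : Fin 2 → ℝ) (v : Fin 2 → Fin 2 → ℝ) (i : Fin 2) (p : ℝ × ℝ) :
    Measurable (fun q => payoff2 B v i p q) := by
  unfold payoff2
  exact ((((winProb2_meas B v i 0 p.1).comp measurable_fst).mul_const _).sub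
    measurable_const).add ((((winProb2_meas B v i 1 p.2).comp
      measurable_snd).mul_const _).sub measurable_const)

lemma ae_eq_off_singleton {f g : ℝ → ℝ} {a : ℝ} (h : ∀ t, t ≠ a → f t = g t) :
    f =ᵐ[volume] g := by
  rw [Filter.eventuallyEq_iff_exists_mem]
  refine ⟨{a}ᶜ, ?_, fun t ht => h t ht⟩
  rw [mem_ae_iff, compl_compl]
  exact Real.volume_singleton

lemma int_step1 {c x : ℝ} (hc : 0 < c) (hx : 0 ≤ x) (W : ℝ → ℝ)
    (h1 : ∀ u, u < x → W u = 1) (h0 : ∀ u, x < u → W u = 0) :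
    ∫ t in Icc (0:ℝ) 1, W (t * c) = min (x / c) 1 := by
  have hae : (fun t => W (t * c)) =ᵐ[volume.restrict (Icc (0:ℝ) 1)]
      (Iio (x / c)).indicator (fun _ => (1:ℝ)) := by
    refine ae_restrict_of_ae (ae_eq_off_singleton (a := x / c) fun t hne => ?_)
    rcases lt_trichotomy t (x / c) with h | h | h
    · rw [h1 _ ((lt_div_iff₀ hc).mp h), indicator_of_mem (mem_Iio.mpr h)]
    · exact absurd h hne
    · rw [h0 _ ((div_lt_iff₀ hc).mp h), indicator_of_notMem (by simp [mem_Iio, not_lt, h.le])]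
  rw [integral_congr_ae hae, setIntegral_indicator measurableSet_Iio]
  rw [setIntegral_const]
  rcases le_or_gt (x / c) 1 with h | h
  · have hs : Icc (0:ℝ) 1 ∩ Iio (x / c) = Ico 0 (x / c) := by
      ext t
      simp only [mem_inter_iff, mem_Icc, mem_Iio, mem_Ico]
      constructor
      · rintro ⟨⟨h1', _⟩, h3⟩; exact ⟨h1', h3⟩
      · rintro ⟨h1', h3⟩; exact ⟨⟨h1', h3.le.trans h⟩, h3⟩
    rw [hs, Real.volume_real_Ico, min_eq_left h]
    simp [ENNReal.toReal_ofReal (div_nonneg hx hc.le), div_nonneg hx hc.le]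
  · have hs : Icc (0:ℝ) 1 ∩ Iio (x / c) = Icc 0 1 := by
      refine inter_eq_left.mpr fun t ht => ?_
      exact mem_Iio.mpr (lt_of_le_of_lt ht.2 h)
    rw [hs, Real.volume_real_Icc, min_eq_right h.le]
    norm_num

lemma int_step2 {c x : ℝ} (hc : 0 < c) (hx : 0 ≤ x) (W : ℝ → ℝ)
    (h1 : ∀ u, u < x → W u = 1) (h0 : ∀ u, x < u → W u = 0) :
    ∫ t in Icc (0:ℝ) 1, W ((1 - t) * c) = min (x / c) 1 := by
  have hae : (fun t => W ((1 - t) * c)) =ᵐ[volume.restrict (Icc (0:ℝ) 1)]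
      (Ioi (1 - x / c)).indicator (fun _ => (1:ℝ)) := by
    refine ae_restrict_of_ae (ae_eq_off_singleton (a := 1 - x / c) fun t hne => ?_)
    rcases lt_trichotomy t (1 - x / c) with h | h | h
    · have hlt : x < (1 - t) * c := by
        have : x / c < 1 - t := by linarith
        exact (div_lt_iff₀ hc).mp this
      rw [h0 _ hlt, indicator_of_notMem (by simp [mem_Ioi, not_lt, h.le])]
    · exact absurd h hne
    · have hlt : (1 - t) * c < x := by
        have : 1 - t < x / c := by linarith
        exact (lt_div_iff₀ hc).mp this
      rw [h1 _ hlt, indicator_of_mem (mem_Ioi.mpr h)]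
  rw [integral_congr_ae hae, setIntegral_indicator measurableSet_Ioi]
  rw [setIntegral_const]
  rcases le_or_gt (x / c) 1 with h | h
  · have hr : 0 ≤ x / c := div_nonneg hx hc.le
    have hs : Icc (0:ℝ) 1 ∩ Ioi (1 - x / c) = Ioc (1 - x / c) 1 := by
      ext t
      simp only [mem_inter_iff, mem_Icc, mem_Ioi, mem_Ioc]
      constructor
      · rintro ⟨⟨_, h2⟩, h3⟩; exact ⟨h3, h2⟩
      · rintro ⟨h3, h2⟩; exact ⟨⟨by linarith, h2⟩, h3⟩
    rw [hs, Real.volume_real_Ioc, min_eq_left h]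
    rw [show (1 : ℝ) - (1 - x / c) = x / c by ring]
    simp [ENNReal.toReal_ofReal hr, hr]
  · have hs : Icc (0:ℝ) 1 ∩ Ioi (1 - x / c) = Icc 0 1 := by
      refine inter_eq_left.mpr fun t ht => ?_
      have : 1 - x / c < 0 := by linarith
      exact mem_Ioi.mpr (lt_of_lt_of_le this ht.1)
    rw [hs, Real.volume_real_Icc, min_eq_right h.le]
    norm_num

lemma payoff2_int (B : Fin 2 → ℝ) (v : Fin 2 → Fin 2 → ℝ) (i : Fin 2) (vv : ℝ)
    (hvv : ∀ i j, v i j = vv) {c : ℝ} (hc : 0 < c) (p : ℝ × ℝ)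
    (hx : 0 ≤ p.1) (hy : 0 ≤ p.2) :
    ∫ t in Icc (0:ℝ) 1, payoff2 B v i p (t * c, (1 - t) * c)
      = (min (p.1 / c) 1 * vv - p.1) + (min (p.2 / c) 1 * vv - p.2) := by
  have hW0 : Measurable fun t : ℝ => winProb2 B v i 0 p.1 (t * c) :=
    (winProb2_meas B v i 0 p.1).comp (measurable_id.mul_const c)
  have hW1 : Measurable fun t : ℝ => winProb2 B v i 1 p.2 ((1 - t) * c) :=
    (winProb2_meas B v i 1 p.2).comp ((measurable_const.sub measurable_id).mul_const c)
  have int0 : Integrable (fun t => winProb2 B v i 0 p.1 (t * c))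
      (volume.restrict (Icc (0:ℝ) 1)) := by
    refine (integrable_const (1:ℝ)).mono' hW0.aestronglyMeasurable
      (Filter.Eventually.of_forall fun t => ?_)
    rw [Real.norm_eq_abs, abs_le]
    exact ⟨by linarith [winProb2_nonneg B v i 0 p.1 (t * c)],
      winProb2_le_one B v i 0 p.1 (t * c)⟩
  have int1 : Integrable (fun t => winProb2 B v i 1 p.2 ((1 - t) * c))
      (volume.restrict (Icc (0:ℝ) 1)) := by
    refine (integrable_const (1:ℝ)).mono' hW1.aestronglyMeasurable
      (Filter.Eventually.of_forall fun t => ?_)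
    rw [Real.norm_eq_abs, abs_le]
    exact ⟨by linarith [winProb2_nonneg B v i 1 p.2 ((1 - t) * c)],
      winProb2_le_one B v i 1 p.2 ((1 - t) * c)⟩
  have hpe : ∀ t : ℝ, payoff2 B v i p (t * c, (1 - t) * c)
      = (winProb2 B v i 0 p.1 (t * c) * v i 0 - p.1)
        + (winProb2 B v i 1 p.2 ((1 - t) * c) * v i 1 - p.2) := fun t => rfl
  simp only [hpe]
  have intm0 : Integrable (fun t => winProb2 B v i 0 p.1 (t * c) * v i 0)
      (volume.restrict (Icc (0:ℝ) 1)) := int0.mul_const _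
  have intm1 : Integrable (fun t => winProb2 B v i 1 p.2 ((1 - t) * c) * v i 1)
      (volume.restrict (Icc (0:ℝ) 1)) := int1.mul_const _
  have intA : Integrable (fun t => winProb2 B v i 0 p.1 (t * c) * v i 0 - p.1)
      (volume.restrict (Icc (0:ℝ) 1)) := intm0.sub (integrable_const p.1)
  have intB : Integrable (fun t => winProb2 B v i 1 p.2 ((1 - t) * c) * v i 1 - p.2)
      (volume.restrict (Icc (0:ℝ) 1)) := intm1.sub (integrable_const p.2)
  rw [integral_add intA intB,
    integral_sub intm0 (integrable_const p.1),
    integral_sub intm1 (integrable_const p.2),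
    integral_mul_const, integral_mul_const,
    int_step1 hc hx _ (fun u hu => winProb2_of_lt B v i 0 hu)
      (fun u hu => winProb2_of_gt B v i 0 hu),
    int_step2 hc hy _ (fun u hu => winProb2_of_lt B v i 1 hu)
      (fun u hu => winProb2_of_gt B v i 1 hu),
    hvv i 0, hvv i 1]
  simp [Real.volume_real_Icc]

lemma phi_le {vv Bo c x y : ℝ} (hvv : 0 < vv) (hc : 0 < c) (hceq : c = min vv Bo)
    (hx : 0 ≤ x) (hy : 0 ≤ y) (hxy : x + y ≤ Bo) :
    (min (x / c) 1 * vv - x) + (min (y / c) 1 * vv - y) ≤ vv - c := by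
  rcases le_total vv Bo with h | h
  · have hcv : c = vv := by rw [hceq, min_eq_left h]
    have key : ∀ z : ℝ, 0 ≤ z → min (z / c) 1 * vv - z ≤ 0 := by
      intro z hz
      have h1 : min (z / c) 1 * vv ≤ z / c * vv :=
        mul_le_mul_of_nonneg_right (min_le_left _ _) hvv.le
      have h2 : z / c * vv = z := by rw [hcv]; field_simp
      linarith
    have := key x hx
    have := key y hy
    linarith [hcv]
  · have hcB : c = Bo := by rw [hceq, min_eq_right h]
    have hvc : c ≤ vv := hceq ▸ min_le_left _ _
    have hxc : x / c ≤ 1 := (div_le_one hc).mpr (by linarith)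
    have hyc : y / c ≤ 1 := (div_le_one hc).mpr (by linarith)
    rw [min_eq_left hxc, min_eq_left hyc]
    have hgoal : (x + y) * vv / c ≤ vv - c + (x + y) := by
      rw [div_le_iff₀ hc]; nlinarith
    have hsplit : x / c * vv - x + (y / c * vv - y) = (x + y) * vv / c - (x + y) := by
      field_simp
    linarith

lemma feas_measurable (Bi : ℝ) : MeasurableSet (Feas Bi) := by
  have : IsClosed (Feas Bi) := by
    have : Feas Bi = {p : ℝ × ℝ | 0 ≤ p.1} ∩ ({p : ℝ × ℝ | 0 ≤ p.2} ∩
        {p : ℝ × ℝ | p.1 + p.2 ≤ Bi}) := rfl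
    rw [this]
    exact (isClosed_le continuous_const continuous_fst).inter
      ((isClosed_le continuous_const continuous_snd).inter
        (isClosed_le (continuous_fst.add continuous_snd) continuous_const))
  exact this.measurableSet

/-- Fully symmetric two-item auction: if `B₁ = B₂` and all four valuations equal
`vv`, then both players playing the uniform distribution on the anti-diagonal
segment `{(t, c - t) : t ∈ [0, c]}`, where `c = min {vv, B₁}`, is a Nash
equilibrium. -/
theorem nash_two_items_symmetric (B : Fin 2 → ℝ) (v : Fin 2 → Fin 2 → ℝ)
    (hB : ∀ i, 0 ≤ B i) (hv : ∀ i j, 0 < v i j)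
    (hBeq : B 0 = B 1) (vv : ℝ) (hvv : ∀ i j, v i j = vv) :
    IsNash2 B v (fun _ =>
      unifSeg (0, min vv (B 0)) (min vv (B 0), 0)) := by
  have hvv0 : 0 < vv := hvv 0 0 ▸ hv 0 0
  set c : ℝ := min vv (B 0) with hcdef
  have hc0 : 0 ≤ c := le_min hvv0.le (hB 0)
  have hcv : c ≤ vv := min_le_left _ _
  set g : ℝ → ℝ × ℝ := fun t => (t * c, (1 - t) * c) with hgdef
  set I : Set ℝ := Icc (0:ℝ) 1 with hIdef
  set m : Measure ℝ := volume.restrict I with hmdef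
  have hgmeas : Measurable g :=
    (measurable_id.mul_const c).prodMk ((measurable_const.sub measurable_id).mul_const c)
  have hgcont : Continuous g :=
    (continuous_id.mul continuous_const).prodMk
      ((continuous_const.sub continuous_id).mul continuous_const)
  have hmprob : IsProbabilityMeasure m := ⟨by
    rw [hmdef, Measure.restrict_apply_univ, hIdef, Real.volume_Icc]; norm_num⟩
  set ν : Measure (ℝ × ℝ) := unifSeg (0, c) (c, 0) with hνdef
  have hgν : ν = Measure.map g m := by
    rw [hνdef]; unfold unifSeg; congr 1; funext t
    show ((1 - t) * (0:ℝ) + t * c, (1 - t) * c + t * 0) = (t * c, (1 - t) * c)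
    norm_num
  have hνprob : IsProbabilityMeasure ν := by
    rw [hgν]; exact Measure.isProbabilityMeasure_map hgmeas.aemeasurable
  have hνmap : ∀ i (p : ℝ × ℝ), (∫ q, payoff2 B v i p q ∂ν)
      = ∫ t in I, payoff2 B v i p (g t) := by
    intro i p
    rw [hgν, integral_map hgmeas.aemeasurable (payoff2_meas B v i p).aestronglyMeasurable]
  have hBall : ∀ k : Fin 2, B k = B 0 := by
    intro k; fin_cases k
    · rfl
    · exact hBeq.symm
  have hzero : ∀ (hc : c = 0) (i : Fin 2), ∀ p ∈ Feas (B 0),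
      (∫ t in I, payoff2 B v i p (g t)) = vv - c := by
    intro hc i p hp
    have hB0 : B 0 = 0 := by
      rcases min_eq_iff.mp (hcdef.symm.trans hc) with h | h
      · linarith [h.1]
      · exact h.1
    have hp0 : p = (0, 0) := by
      obtain ⟨h1, h2, h3⟩ := hp
      rw [hB0] at h3
      have e1 : p.1 = 0 := le_antisymm (by linarith) h1
      have e2 : p.2 = 0 := le_antisymm (by linarith) h2
      exact Prod.ext e1 e2
    rw [hp0]
    have hg0 : ∀ t : ℝ, g t = (0, 0) := by
      intro t
      show (t * c, (1 - t) * c) = (0, 0)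
      rw [hc]
      norm_num
    have hpay : ∀ t : ℝ, payoff2 B v i ((0:ℝ), (0:ℝ)) (g t) = vv := by
      intro t
      rw [hg0 t]
      show winProb2 B v i 0 0 0 * v i 0 - 0 + (winProb2 B v i 1 0 0 * v i 1 - 0) = vv
      have hw : ∀ j : Fin 2, winProb2 B v i j 0 0 = 1 / 2 := by
        intro j
        have hmineq : min (B (1 - i)) (v (1 - i) j) = min (B i) (v i j) := by
          rw [hBall (1 - i), hBall i, hvv (1 - i) j, hvv i j]
        unfold winProb2
        rw [if_neg (lt_irrefl (0:ℝ)), if_neg (lt_irrefl (0:ℝ)),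
          if_neg (fun h => absurd h.2 (by rw [hmineq]; exact lt_irrefl _)),
          if_neg (fun h => absurd h.2 (by rw [hmineq]; exact lt_irrefl _))]
      rw [hw 0, hw 1, hvv i 0, hvv i 1]
      ring
    simp only [hpay]
    rw [setIntegral_const, hc]
    rw [hIdef, Real.volume_real_Icc]
    norm_num
  -- value on the support
  have key2 : ∀ i : Fin 2, ∀ t ∈ I, (∫ q, payoff2 B v i (g t) q ∂ν) = vv - c := by
    intro i t ht
    rw [hνmap]
    rcases eq_or_lt_of_le hc0 with hc | hc
    · refine hzero hc.symm i (g t) ⟨mul_nonneg ht.1 hc0,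
        mul_nonneg (by linarith [ht.2]) hc0, ?_⟩
      show t * c + (1 - t) * c ≤ B 0
      have he : t * c + (1 - t) * c = c := by ring
      rw [he]
      exact min_le_right _ _
    · have h1 : 0 ≤ (g t).1 := mul_nonneg ht.1 hc0
      have h2 : 0 ≤ (g t).2 := mul_nonneg (by linarith [ht.2]) hc0
      have := payoff2_int B v i vv hvv hc (g t) h1 h2
      have hge : ∀ s : ℝ, payoff2 B v i (g t) (s * c, (1 - s) * c)
          = payoff2 B v i (g t) (g s) := fun s => rfl
      simp only [hge] at this
      rw [this]
      have e1 : (g t).1 / c = t := by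
        show t * c / c = t
        field_simp
      have e2 : (g t).2 / c = 1 - t := by
        show (1 - t) * c / c = 1 - t
        field_simp
      rw [e1, e2, min_eq_left ht.2, min_eq_left (by linarith [ht.1] : 1 - t ≤ 1)]
      show t * vv - t * c + ((1 - t) * vv - (1 - t) * c) = vv - c
      ring
  -- bound on the feasible set
  have key1 : ∀ i : Fin 2, ∀ p ∈ Feas (B 0), (∫ q, payoff2 B v i p q ∂ν) ≤ vv - c := by
    intro i p hp
    obtain ⟨hp1, hp2, hp3⟩ := hp
    rcases eq_or_lt_of_le hc0 with hc | hc
    · rw [hνmap]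
      exact le_of_eq (hzero hc.symm i p ⟨hp1, hp2, hp3⟩)
    · rw [hνmap]
      have := payoff2_int B v i vv hvv hc p hp1 hp2
      have hge : ∀ s : ℝ, payoff2 B v i p (s * c, (1 - s) * c)
          = payoff2 B v i p (g s) := fun s => rfl
      simp only [hge] at this
      rw [this]
      exact phi_le hvv0 hc hcdef hp1 hp2 hp3
  -- the strategy is feasible
  have hνFeas : ν (Feas (B 0)) = 1 := by
    rw [hgν, Measure.map_apply hgmeas (feas_measurable _), hmdef,
      Measure.restrict_apply (hgmeas (feas_measurable _))]
    have hsub : g ⁻¹' Feas (B 0) ∩ I = I := by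
      refine inter_eq_right.mpr fun t ht => ?_
      refine ⟨mul_nonneg ht.1 hc0, mul_nonneg (by linarith [ht.2]) hc0, ?_⟩
      show t * c + (1 - t) * c ≤ B 0
      have : t * c + (1 - t) * c = c := by ring
      rw [this]
      exact min_le_right _ _
    rw [hsub, hIdef, Real.volume_Icc]; norm_num
  constructor
  · intro i
    refine ⟨hνprob, ?_⟩
    rw [hBall i]
    exact hνFeas
  · intro i μ hμ
    haveI := hμ.1
    haveI := hνprob
    have hμF : ∀ᵐ p ∂μ, p ∈ Feas (B 0) := by
      rw [ae_iff]
      have : {p : ℝ × ℝ | ¬ p ∈ Feas (B 0)} = (Feas (B 0))ᶜ := rfl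
      rw [this, measure_compl (feas_measurable _) (measure_ne_top _ _), measure_univ,
        ← hBall i, hμ.2, tsub_self]
    show expUtil2 B v i μ ν ≤ expUtil2 B v i ν ν
    have hL : expUtil2 B v i μ ν ≤ vv - c := by
      unfold expUtil2
      by_cases hint : Integrable (fun p => ∫ q, payoff2 B v i p q ∂ν) μ
      · have hb : (fun p => ∫ q, payoff2 B v i p q ∂ν) ≤ᵐ[μ] fun _ => vv - c :=
          hμF.mono fun p hp => key1 i p hp
        calc ∫ p, (∫ q, payoff2 B v i p q ∂ν) ∂μ
            ≤ ∫ _, (vv - c) ∂μ := integral_mono_ae hint (integrable_const _) hb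
          _ = vv - c := by simp
      · rw [integral_undef hint]; linarith
    have hR : expUtil2 B v i ν ν = vv - c := by
      unfold expUtil2
      have hK : IsCompact (g '' I) := isCompact_Icc.image hgcont
      have hnull : ν ((g '' I)ᶜ) = 0 := by
        rw [hgν, Measure.map_apply hgmeas hK.measurableSet.compl, hmdef,
          Measure.restrict_apply (hgmeas hK.measurableSet.compl)]
        have : g ⁻¹' (g '' I)ᶜ ∩ I = ∅ := by
          rw [eq_empty_iff_forall_notMem]
          rintro t ⟨hc1, hI1⟩
          exact hc1 (mem_image_of_mem g hI1)
        rw [this, measure_empty]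
      have hb : (fun p => ∫ q, payoff2 B v i p q ∂ν) =ᵐ[ν] fun _ => vv - c := by
        rw [Filter.eventuallyEq_iff_exists_mem]
        refine ⟨g '' I, ?_, ?_⟩
        · rw [mem_ae_iff]; exact hnull
        · rintro p ⟨t, ht, rfl⟩
          exact key2 i t ht
      rw [integral_congr_ae hb]
      simp
    rw [hR]
    exact hL
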